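/- For every real number t > 0, the set { z : ℂ | t ≤ ∠ 1 0 z ∧ t ≤ ∠ 0 1 z ∧ t ≤ ∠ 0 z 1 } is compact, where ∠ a b c denotes the Euclidean angle at the vertex b of the triple (a, b, c) in ℂ regarded as a Euclidean plane. -/
import Mathlib


open EuclideanGeometry Filter Topology


private lemma contAt_angle_right (a b z : ℂ) (h1 : a ≠ b) (h2 : z ≠ b) :
    ContinuousAt (fun w : ℂ => ∠ a b w) z :=
  (EuclideanGeometry.continuousAt_angle (x := (a, b, z)) h1 h2).comp
    (f := fun w : ℂ => (a, b, w)) (by fun_prop)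

private lemma contAt_angle_mid (a b z : ℂ) (h1 : a ≠ z) (h2 : b ≠ z) :
    ContinuousAt (fun w : ℂ => ∠ a w b) z :=
  (EuclideanGeometry.continuousAt_angle (x := (a, z, b)) h1 h2).comp
    (f := fun w : ℂ => (a, w, b)) (by fun_prop)

theorem triangles_with_angles_bounded_below_compact (t : ℝ) (ht : 0 < t) :
    IsCompact { z : ℂ | t ≤ ∠ (1 : ℂ) 0 z ∧ t ≤ ∠ (0 : ℂ) 1 z ∧ t ≤ ∠ (0 : ℂ) z 1 } := by
  set S := { z : ℂ | t ≤ ∠ (1 : ℂ) 0 z ∧ t ≤ ∠ (0 : ℂ) 1 z ∧ t ≤ ∠ (0 : ℂ) z 1 } with hS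
  -- the set is closed
  have hclosed : IsClosed S := by
    apply IsSeqClosed.isClosed
    intro u z hu hz
    have h0 : z ≠ 0 := by
      rintro rfl
      have hc : ContinuousAt (fun w : ℂ => ∠ (0 : ℂ) 1 w) 0 :=
        contAt_angle_right 0 1 0 (by norm_num) (by norm_num)
      have hlim : Tendsto (fun n => ∠ (0 : ℂ) 1 (u n)) atTop (𝓝 (∠ (0 : ℂ) 1 0)) :=
        (hc.tendsto).comp hz
      have h01 : ∠ (0 : ℂ) 1 0 = 0 := angle_self_of_ne (by norm_num)
      rw [h01] at hlim
      have : t ≤ 0 := ge_of_tendsto' hlim fun n => (hu n).2.1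
      linarith
    have h1 : z ≠ 1 := by
      rintro rfl
      have hc : ContinuousAt (fun w : ℂ => ∠ (1 : ℂ) 0 w) 1 :=
        contAt_angle_right 1 0 1 (by norm_num) (by norm_num)
      have hlim : Tendsto (fun n => ∠ (1 : ℂ) 0 (u n)) atTop (𝓝 (∠ (1 : ℂ) 0 1)) :=
        (hc.tendsto).comp hz
      have h10 : ∠ (1 : ℂ) 0 1 = 0 := angle_self_of_ne (by norm_num)
      rw [h10] at hlim
      have : t ≤ 0 := ge_of_tendsto' hlim fun n => (hu n).1
      linarith
    refine ⟨?_, ?_, ?_⟩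
    · have hc : ContinuousAt (fun w : ℂ => ∠ (1 : ℂ) 0 w) z :=
        contAt_angle_right 1 0 z (by norm_num) h0
      exact ge_of_tendsto' ((hc.tendsto).comp hz) fun n => (hu n).1
    · have hc : ContinuousAt (fun w : ℂ => ∠ (0 : ℂ) 1 w) z :=
        contAt_angle_right 0 1 z (by norm_num) h1
      exact ge_of_tendsto' ((hc.tendsto).comp hz) fun n => (hu n).2.1
    · have hc : ContinuousAt (fun w : ℂ => ∠ (0 : ℂ) w 1) z :=
        contAt_angle_mid 0 1 z (Ne.symm h0) (Ne.symm h1)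
      exact ge_of_tendsto' ((hc.tendsto).comp hz) fun n => (hu n).2.2
  by_cases htpi : t ≤ Real.pi
  · -- bounded
    have hbdd : Bornology.IsBounded S := by
      set c : ℝ := max (Real.cos t) 0 with hc
      have hcos1 : Real.cos t < 1 := by
        simpa using Real.cos_lt_cos_of_nonneg_of_le_pi le_rfl htpi ht
      have hc1 : c < 1 := by simp [hc, hcos1]
      have hc0 : 0 ≤ c := le_max_right _ _
      apply Bornology.IsBounded.subset (Metric.isBounded_closedBall
        (x := (0 : ℂ)) (r := Real.sqrt (1 / (1 - c))))
      intro z hzS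
      have hθ := hzS.2.2
      have hlaw := EuclideanGeometry.law_cos (0 : ℂ) z 1
      have hd : dist (0 : ℂ) (1 : ℂ) = 1 := by simp
      set a := dist (0 : ℂ) z with ha
      set b := dist (1 : ℂ) z with hb
      have ha0 : 0 ≤ a := dist_nonneg
      have hb0 : 0 ≤ b := dist_nonneg
      have hcosle : Real.cos (∠ (0 : ℂ) z 1) ≤ c := by
        rcases le_or_gt (Real.cos (∠ (0 : ℂ) z 1)) 0 with h | h
        · exact le_trans h (le_max_right _ _)
        · refine le_trans ?_ (le_max_left _ _)
          exact Real.cos_le_cos_of_nonneg_of_le_pi (le_of_lt ht)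
            (EuclideanGeometry.angle_le_pi _ _ _) hθ
      rw [hd] at hlaw
      -- hlaw : 1 * 1 = a * a + b * b - 2 * a * b * cos θ
      have key : (1 - c) * (a * a + b * b) ≤ 1 := by
        nlinarith [sq_nonneg (a - b), mul_le_mul_of_nonneg_left hcosle
          (by positivity : (0:ℝ) ≤ 2 * a * b)]
      have ha2 : a * a ≤ 1 / (1 - c) := by
        rw [le_div_iff₀ (by linarith)]
        nlinarith [mul_self_nonneg b]
      have : a ≤ Real.sqrt (1 / (1 - c)) := by
        rw [show a = Real.sqrt (a * a) from (Real.sqrt_mul_self ha0).symm]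
        exact Real.sqrt_le_sqrt ha2
      rw [Metric.mem_closedBall, dist_comm]
      exact this
    exact Metric.isCompact_of_isClosed_isBounded hclosed hbdd
  · -- t > π : set is empty
    have : S = ∅ := by
      ext z
      simp only [Set.mem_empty_iff_false, iff_false, hS, Set.mem_setOf_eq]
      rintro ⟨h1, -, -⟩
      exact htpi (le_trans h1 (EuclideanGeometry.angle_le_pi _ _ _))
    rw [this]
    exact isCompact_empty
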